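/- Let S ∈ ℝ^N with S ≠ 0 and let {i, j} be a strategic set of two nodes. Then there exists k ∈ {i, j} such that Φ_k does not vanish identically on any nonempty open subinterval of (0, ∞); in particular the zero set of Φ_k in (0, T) has Lebesgue measure zero. -/

import Mathlib

open Matrix Set MeasureTheory

section Auxiliary

/-- `Real.sin` is real-analytic. -/
lemma analyticAt_rsin (x : ℝ) : AnalyticAt ℝ Real.sin x := by
  have h1 : AnalyticAt ℂ Complex.sin (x : ℂ) := by
    have hdef : Complex.sin = fun z =>
        (Complex.exp (-z * Complex.I) - Complex.exp (z * Complex.I)) * Complex.I / 2 := rfl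
    rw [hdef]
    apply AnalyticAt.div _ analyticAt_const two_ne_zero
    exact (((analyticAt_id.neg.mul analyticAt_const).cexp.sub
      (analyticAt_id.mul analyticAt_const).cexp).mul analyticAt_const)
  have h2 : AnalyticAt ℝ (fun y : ℝ => (Complex.sin (y:ℂ)).re) x :=
    (Complex.reCLM.analyticAt _).comp
      ((h1.restrictScalars).comp (Complex.ofRealCLM.analyticAt x))
  have : Real.sin = fun y : ℝ => (Complex.sin (y:ℂ)).re :=
    funext fun y => (Complex.sin_ofReal_re y).symm
  rw [this]; exact h2

/-- Differentiating a vanishing sine sum yields a vanishing cosine sum. -/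
lemma sin_to_cos {ι : Type*} (F : Finset ι) (c ω : ι → ℝ)
    (hg : ∀ t : ℝ, ∑ n ∈ F, c n * Real.sin (ω n * t) = 0) :
    ∀ t : ℝ, ∑ n ∈ F, c n * ω n * Real.cos (ω n * t) = 0 := by
  intro t
  have hd : HasDerivAt (fun t : ℝ => ∑ n ∈ F, c n * Real.sin (ω n * t))
      (∑ n ∈ F, c n * (Real.cos (ω n * t) * (ω n * 1))) t := by
    apply HasDerivAt.fun_sum
    intro n _
    have := ((Real.hasDerivAt_sin (ω n * t)).comp t
      ((hasDerivAt_id t).const_mul (ω n))).const_mul (c n)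
    simpa [Function.comp] using this
  have hzero : (fun t : ℝ => ∑ n ∈ F, c n * Real.sin (ω n * t)) = fun _ => (0:ℝ) :=
    funext hg
  rw [hzero] at hd
  have h0 := hd.unique (hasDerivAt_const t 0)
  calc ∑ n ∈ F, c n * ω n * Real.cos (ω n * t)
      = ∑ n ∈ F, c n * (Real.cos (ω n * t) * (ω n * 1)) :=
        Finset.sum_congr rfl (fun n _ => by ring)
    _ = 0 := h0

/-- Differentiating a vanishing cosine sum yields a vanishing sine sum. -/
lemma cos_to_sin {ι : Type*} (F : Finset ι) (c ω : ι → ℝ)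
    (hg : ∀ t : ℝ, ∑ n ∈ F, c n * Real.cos (ω n * t) = 0) :
    ∀ t : ℝ, ∑ n ∈ F, c n * ω n * Real.sin (ω n * t) = 0 := by
  intro t
  have hd : HasDerivAt (fun t : ℝ => ∑ n ∈ F, c n * Real.cos (ω n * t))
      (∑ n ∈ F, c n * (-Real.sin (ω n * t) * (ω n * 1))) t := by
    apply HasDerivAt.fun_sum
    intro n _
    have := ((Real.hasDerivAt_cos (ω n * t)).comp t
      ((hasDerivAt_id t).const_mul (ω n))).const_mul (c n)
    simpa [Function.comp] using this
  have hzero : (fun t : ℝ => ∑ n ∈ F, c n * Real.cos (ω n * t)) = fun _ => (0:ℝ) :=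
    funext hg
  rw [hzero] at hd
  have h0 := hd.unique (hasDerivAt_const t 0)
  have : ∑ n ∈ F, c n * ω n * Real.sin (ω n * t)
      = -∑ n ∈ F, c n * (-Real.sin (ω n * t) * (ω n * 1)) := by
    rw [← Finset.sum_neg_distrib]
    exact Finset.sum_congr rfl (fun n _ => by ring)
  rw [this, h0, neg_zero]

/-- Linear independence of `t` and sines with distinct positive frequencies. -/
lemma coeffs_eq_zero {ι : Type*} [DecidableEq ι] (F : Finset ι) (a : ℝ) (b ω : ι → ℝ)
    (hω : ∀ n ∈ F, 0 < ω n) (hinj : Set.InjOn ω F)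
    (h : ∀ t : ℝ, a * t + ∑ n ∈ F, b n * Real.sin (ω n * t) = 0) :
    a = 0 ∧ ∀ n ∈ F, b n = 0 := by
  have hM : ∀ t : ℝ, |∑ n ∈ F, b n * Real.sin (ω n * t)| ≤ ∑ n ∈ F, |b n| := by
    intro t
    refine (Finset.abs_sum_le_sum_abs _ _).trans (Finset.sum_le_sum fun n _ => ?_)
    rw [abs_mul]
    exact mul_le_of_le_one_right (abs_nonneg _) (Real.abs_sin_le_one _)
  have ha : a = 0 := by
    by_contra ha
    set M := ∑ n ∈ F, |b n| with hMdef
    have hM0 : 0 ≤ M := Finset.sum_nonneg fun n _ => abs_nonneg _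
    have ht := h ((M + 1) / |a|)
    have habs : |a * ((M + 1) / |a|)| = M + 1 := by
      rw [abs_mul, abs_div, abs_abs, abs_of_nonneg (by linarith : (0:ℝ) ≤ M + 1)]
      field_simp
    have : a * ((M + 1) / |a|) = -∑ n ∈ F, b n * Real.sin (ω n * ((M + 1) / |a|)) := by
      linarith [ht]
    rw [this, abs_neg] at habs
    have := hM ((M + 1) / |a|)
    rw [habs] at this
    linarith
  have hsin : ∀ t : ℝ, ∑ n ∈ F, b n * Real.sin (ω n * t) = 0 := by
    intro t; have := h t; rw [ha] at this; linarith
  have key : ∀ m : ℕ, ∀ t : ℝ, ∑ n ∈ F, b n * (-(ω n)^2)^m * Real.sin (ω n * t) = 0 := by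
    intro m
    induction m with
    | zero => intro t; simpa using hsin t
    | succ m ih =>
      have hc := sin_to_cos F (fun n => b n * (-(ω n)^2)^m) ω ih
      have hs := cos_to_sin F (fun n => b n * (-(ω n)^2)^m * ω n) ω hc
      intro t
      have := hs t
      calc ∑ n ∈ F, b n * (-(ω n)^2)^(m+1) * Real.sin (ω n * t)
          = -∑ n ∈ F, b n * (-(ω n)^2)^m * ω n * ω n * Real.sin (ω n * t) := by
            rw [← Finset.sum_neg_distrib]
            exact Finset.sum_congr rfl (fun n _ => by ring)
        _ = 0 := by rw [this]; exact neg_zero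
  have hmom : ∀ m : ℕ, ∑ n ∈ F, (b n * ω n) * (-(ω n)^2)^m = 0 := by
    intro m
    have h0 := sin_to_cos F (fun n => b n * (-(ω n)^2)^m) ω (key m) 0
    simp only [mul_zero, Real.cos_zero, mul_one] at h0
    rw [← h0]
    exact Finset.sum_congr rfl (fun n _ => by ring)
  have hpoly : ∀ q : Polynomial ℝ, ∑ n ∈ F, (b n * ω n) * q.eval (-(ω n)^2) = 0 := by
    intro q
    induction q using Polynomial.induction_on' with
    | add p q hp hq =>
      simp only [Polynomial.eval_add, mul_add, Finset.sum_add_distrib, hp, hq, add_zero]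
    | monomial p c =>
      simp only [Polynomial.eval_monomial]
      calc ∑ n ∈ F, (b n * ω n) * (c * (-(ω n)^2)^p)
          = c * ∑ n ∈ F, (b n * ω n) * (-(ω n)^2)^p := by
            rw [Finset.mul_sum]; exact Finset.sum_congr rfl (fun n _ => by ring)
        _ = 0 := by rw [hmom p, mul_zero]
  refine ⟨ha, fun m hm => ?_⟩
  set lam : ι → ℝ := fun n => -(ω n)^2 with hlam
  have hlaminj : Set.InjOn lam F := by
    intro x hx y hy hxy
    apply hinj hx hy
    have : (ω x)^2 = (ω y)^2 := by
      have := hxy; simp only [hlam] at this; linarith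
    nlinarith [hω x hx, hω y hy]
  set P : Polynomial ℝ := ∏ n ∈ F.erase m, (Polynomial.X - Polynomial.C (lam n)) with hP
  have hPm : P.eval (lam m) ≠ 0 := by
    rw [hP, Polynomial.eval_prod]
    apply Finset.prod_ne_zero_iff.mpr
    intro n hn
    simp only [Polynomial.eval_sub, Polynomial.eval_X, Polynomial.eval_C, sub_ne_zero]
    intro hEq
    exact (Finset.ne_of_mem_erase hn) (hlaminj (Finset.mem_of_mem_erase hn) hm hEq.symm)
  have hPn : ∀ n ∈ F, n ≠ m → P.eval (lam n) = 0 := by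
    intro n hn hne
    rw [hP, Polynomial.eval_prod]
    apply Finset.prod_eq_zero (Finset.mem_erase.mpr ⟨hne, hn⟩)
    simp
  have := hpoly P
  rw [Finset.sum_eq_single m (fun n hn hne => by rw [hPn n hn hne, mul_zero])
    (fun hmem => absurd hm hmem)] at this
  have hbm : b m * ω m = 0 := by
    rcases mul_eq_zero.mp this with h' | h'
    · exact h'
    · exact absurd h' hPm
  rcases mul_eq_zero.mp hbm with h' | h'
  · exact h'
  · exact absurd h' (ne_of_gt (hω m hm))

end Auxiliary

/-- `Φ_k(t) = ⟨S, v¹⟩ t v¹_k + Σ_{n=2}^N (⟨S, vⁿ⟩/ω_n) sin(ω_n t) vⁿ_k`. -/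
noncomputable def Phi {N : ℕ} (hN : 2 ≤ N) (ω : Fin N → ℝ) (v : Fin N → Fin N → ℝ)
    (S : Fin N → ℝ) (k : Fin N) (t : ℝ) : ℝ :=
  (S ⬝ᵥ v ⟨0, by omega⟩) * t * v ⟨0, by omega⟩ k
    + ∑ n ∈ Finset.univ.filter (fun n : Fin N => n ≠ ⟨0, by omega⟩),
        (S ⬝ᵥ v n) / ω n * Real.sin (ω n * t) * v n k

lemma phi_analytic {N : ℕ} (hN : 2 ≤ N) (ω : Fin N → ℝ) (v : Fin N → Fin N → ℝ)
    (S : Fin N → ℝ) (k : Fin N) : AnalyticOnNhd ℝ (Phi hN ω v S k) univ := by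
  intro t _
  unfold Phi
  apply AnalyticAt.add
  · exact (analyticAt_const.mul analyticAt_id).mul analyticAt_const
  · apply Finset.analyticAt_fun_sum
    intro n _
    exact (analyticAt_const.mul ((analyticAt_rsin _).comp
      (analyticAt_const.mul analyticAt_id))).mul analyticAt_const

/-- If `S ≠ 0` and `{i, j}` is strategic, then for `k = i` or `k = j` the function `Φ_k` does
not vanish identically on any nonempty open subinterval of `(0, ∞)`; in particular its zero set
in `(0, T)` has Lebesgue measure zero. -/
theorem Phi_nonvanishing_strategic
    {N : ℕ} (hN : 2 ≤ N)
    (Δ : Matrix (Fin N) (Fin N) ℝ) (hsymm : Δ.IsSymm)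
    (ω : Fin N → ℝ) (v : Fin N → Fin N → ℝ)
    (hω0 : ω ⟨0, by omega⟩ = 0) (hωmono : StrictMono ω)
    (horth : ∀ n m : Fin N, v n ⬝ᵥ v m = if n = m then 1 else 0)
    (heig : ∀ n : Fin N, Δ.mulVec (v n) = (-(ω n) ^ 2) • v n)
    (S : Fin N → ℝ) (hS : S ≠ 0)
    (i j : Fin N) (hij : i ≠ j)
    (hstrat : ∀ n : Fin N, v n i ≠ 0 ∨ v n j ≠ 0)
    (T : ℝ) (hT : 0 < T) :
    ∃ k ∈ ({i, j} : Set (Fin N)),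
      (∀ a b : ℝ, 0 ≤ a → a < b → ¬ ∀ t ∈ Ioo a b, Phi hN ω v S k t = 0) ∧
      volume {t ∈ Ioo (0:ℝ) T | Phi hN ω v S k t = 0} = 0 := by
  set z : Fin N := ⟨0, by omega⟩ with hz
  -- there is a mode with nonzero amplitude
  have hex : ∃ n, S ⬝ᵥ v n ≠ 0 := by
    by_contra hall
    push_neg at hall
    apply hS
    set G : Matrix (Fin N) (Fin N) ℝ := Matrix.of v with hG
    have hGGT : G * Gᵀ = 1 := by
      ext n m
      simp only [Matrix.mul_apply, Matrix.transpose_apply, hG, Matrix.of_apply]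
      have := horth n m
      simp only [dotProduct] at this
      rw [this]
      by_cases h : n = m <;> simp [h, Matrix.one_apply]
    have hGTG : Gᵀ * G = 1 := mul_eq_one_comm.mp hGGT
    have hGS : G.mulVec S = 0 := by
      ext n
      simp only [Matrix.mulVec, hG, Matrix.of_apply, Pi.zero_apply]
      rw [show (fun j => v n j) ⬝ᵥ S = S ⬝ᵥ v n from dotProduct_comm _ _]
      exact hall n
    calc S = (1 : Matrix (Fin N) (Fin N) ℝ).mulVec S := (Matrix.one_mulVec S).symm
      _ = Gᵀ.mulVec (G.mulVec S) := by rw [← hGTG, ← Matrix.mulVec_mulVec]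
      _ = 0 := by rw [hGS, Matrix.mulVec_zero]
  obtain ⟨n₀, hn₀⟩ := hex
  -- choose the observation node
  obtain ⟨k, hkmem, hvk⟩ : ∃ k ∈ ({i, j} : Set (Fin N)), v n₀ k ≠ 0 := by
    rcases hstrat n₀ with h | h
    · exact ⟨i, by simp, h⟩
    · exact ⟨j, by simp, h⟩
  refine ⟨k, hkmem, ?_⟩
  set F : Finset (Fin N) := Finset.univ.filter (fun n : Fin N => n ≠ z) with hF
  have hωpos : ∀ n ∈ F, 0 < ω n := by
    intro n hn
    rw [hF, Finset.mem_filter] at hn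
    have hlt : z < n := by
      rw [Fin.lt_def]
      have : (n : ℕ) ≠ 0 := fun h => hn.2 (Fin.ext h)
      simpa [hz] using Nat.pos_of_ne_zero this
    calc (0:ℝ) = ω z := hω0.symm
      _ < ω n := hωmono hlt
  have hinj : Set.InjOn ω F := fun x _ y _ hxy => hωmono.injective hxy
  -- the key nonvanishing property
  have key : ¬ ∀ t : ℝ, Phi hN ω v S k t = 0 := by
    intro hall
    have h' : ∀ t : ℝ, ((S ⬝ᵥ v z) * v z k) * t
        + ∑ n ∈ F, ((S ⬝ᵥ v n) / ω n * v n k) * Real.sin (ω n * t) = 0 := by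
      intro t
      have h0 := hall t
      unfold Phi at h0
      have hsum : ∑ n ∈ F, ((S ⬝ᵥ v n) / ω n * v n k) * Real.sin (ω n * t)
          = ∑ n ∈ F, (S ⬝ᵥ v n) / ω n * Real.sin (ω n * t) * v n k :=
        Finset.sum_congr rfl (fun n _ => by ring)
      rw [hsum]
      linear_combination h0
    obtain ⟨ha0, hb0⟩ := coeffs_eq_zero F ((S ⬝ᵥ v z) * v z k)
      (fun n => (S ⬝ᵥ v n) / ω n * v n k) ω hωpos hinj h'
    by_cases hzz : n₀ = z
    · rw [hzz] at hn₀ hvk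
      exact (mul_ne_zero hn₀ hvk) ha0
    · have hmem : n₀ ∈ F := by rw [hF, Finset.mem_filter]; exact ⟨Finset.mem_univ _, hzz⟩
      have hωn₀ : ω n₀ ≠ 0 := ne_of_gt (hωpos n₀ hmem)
      exact (mul_ne_zero (div_ne_zero hn₀ hωn₀) hvk) (hb0 n₀ hmem)
  have hanal := phi_analytic hN ω v S k
  constructor
  · -- no vanishing on subintervals
    intro a b _ hab hall
    apply key
    have ht₀ : (a + b) / 2 ∈ Ioo a b := ⟨by linarith, by linarith⟩
    have hev : Phi hN ω v S k =ᶠ[nhds ((a + b) / 2)] 0 :=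
      Filter.eventuallyEq_of_mem (isOpen_Ioo.mem_nhds ht₀) hall
    have := hanal.eqOn_zero_of_preconnected_of_eventuallyEq_zero
      isPreconnected_univ (mem_univ ((a + b) / 2)) hev
    intro t
    exact this (mem_univ t)
  · -- measure-zero zero set
    rcases hanal.eqOn_zero_or_eventually_ne_zero_of_preconnected isPreconnected_univ with
      heq | hcod
    · exact absurd (fun t => heq (mem_univ t)) key
    · have hcod' : {x : ℝ | Phi hN ω v S k x ≠ 0} ∈ Filter.codiscreteWithin (univ : Set ℝ) :=
        hcod
      rw [mem_codiscreteWithin_accPt] at hcod'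
      have hnoacc : ∀ x : ℝ, ¬ AccPt x (Filter.principal {t : ℝ | Phi hN ω v S k t = 0}) := by
        intro x
        have := hcod' x (mem_univ x)
        have hset : (univ : Set ℝ) \ {x : ℝ | Phi hN ω v S k x ≠ 0}
            = {t : ℝ | Phi hN ω v S k t = 0} := by
          ext t; simp [not_not]
        rwa [hset] at this
      have hfin : {t ∈ Ioo (0:ℝ) T | Phi hN ω v S k t = 0}.Finite := by
        by_contra hinf
        rw [← Set.Infinite] at hinf
        have hsub : {t ∈ Ioo (0:ℝ) T | Phi hN ω v S k t = 0} ⊆ Icc 0 T :=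
          fun t ht => Ioo_subset_Icc_self ht.1
        obtain ⟨x, _, hacc⟩ := hinf.exists_accPt_of_subset_isCompact isCompact_Icc hsub
        exact hnoacc x (hacc.mono (Filter.principal_mono.mpr fun t ht => ht.2))
      exact hfin.measure_zero volume
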